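/- Let Cl(2,6) be the Clifford algebra of V = ℝ^{2,6} with orthonormal basis ε', ε₀ (timelike, ι(ε')² = ι(ε₀)² = −1) and ε₅, ε₆, …, ε₁₀ (spacelike, square +1), convention ι(v)² = ⟨v,v⟩·1. Consider the five elements of Cl(2,6): h₁ = ι(ε₅)ι(ε₁₀) + ι(ε₇)ι(ε₈), h₂ = ι(ε₆)ι(ε₁₀) + ι(ε₇)ι(ε₉), h₃ = ι(ε₅)ι(ε₉) + ι(ε₆)ι(ε₈), h₄ = ι(ε')ι(ε₇) + ι(ε₀)ι(ε₁₀), h₅ = ι(ε')ι(ε₆) + ι(ε₀)ι(ε₉). Each h_k lies in 𝔰𝔭𝔦𝔫(2,6) and acts on V by x ↦ [h_k, ι(x)] = h_k·ι(x) − ι(x)·h_k (which again lies in ι(V)). Then the only subspaces W ⊆ V satisfying [h_k, ι(w)] ∈ ι(W) for all w ∈ W and all k = 1,…,5 are W = {0} and W = V; i.e. the five elements act irreducibly on ℝ^{2,6}. -/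

import Mathlib

open CliffordAlgebra

/-! `Cl(2,6)`: the coordinates `0, 1, 2, …, 7` of `ℝ^{2,6}` correspond to the
orthonormal basis `ε', ε₀` (timelike) and `ε₅, ε₆, ε₇, ε₈, ε₉, ε₁₀` (spacelike). -/

/-- The quadratic form of `ℝ^{2,6}` (convention `ι(v)² = ⟨v,v⟩·1`). -/
noncomputable def Q26 : QuadraticForm ℝ (Fin 8 → ℝ) :=
  QuadraticMap.weightedSumSquares ℝ (fun i : Fin 8 => if (i : ℕ) < 2 then (-1 : ℝ) else 1)

/-- The Clifford generators `ε', ε₀, ε₅, …, ε₁₀` of `Cl(2,6)`. -/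
noncomputable def gCl (i : Fin 8) : CliffordAlgebra Q26 :=
  ι Q26 (Pi.single i 1)

/-- The five curvature elements
`h₁ = ε₅ε₁₀ + ε₇ε₈`, `h₂ = ε₆ε₁₀ + ε₇ε₉`, `h₃ = ε₅ε₉ + ε₆ε₈`,
`h₄ = ε'ε₇ + ε₀ε₁₀`, `h₅ = ε'ε₆ + ε₀ε₉` of `Cl(2,6)`. -/
noncomputable def hElt : Fin 5 → CliffordAlgebra Q26
  | 0 => gCl 2 * gCl 7 + gCl 4 * gCl 5
  | 1 => gCl 3 * gCl 7 + gCl 4 * gCl 6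
  | 2 => gCl 2 * gCl 6 + gCl 3 * gCl 5
  | 3 => gCl 0 * gCl 4 + gCl 1 * gCl 7
  | 4 => gCl 0 * gCl 3 + gCl 1 * gCl 6

/-- Each of the five elements `h₁, …, h₅` lies in
`𝔰𝔭𝔦𝔫(2,6) = span{ι(ε_a)ι(ε_b) : a ≠ b}` and acts on `V = ℝ^{2,6}` by
`x ↦ [h, ι(x)]`, which again lies in `ι(V)`; and the only subspaces `W ⊆ V` with
`[h_k, ι(w)] ∈ ι(W)` for all `w ∈ W` and all `k` are `{0}` and `V`:
the five elements act irreducibly on `ℝ^{2,6}`. -/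
/- ### auxiliary material -/

lemma fv0 : ((0:Fin 8):ℕ) = 0 := rfl
lemma fv1 : ((1:Fin 8):ℕ) = 1 := rfl
lemma fv2 : ((2:Fin 8):ℕ) = 2 := rfl
lemma fv3 : ((3:Fin 8):ℕ) = 3 := rfl
lemma fv4 : ((4:Fin 8):ℕ) = 4 := rfl
lemma fv5 : ((5:Fin 8):ℕ) = 5 := rfl
lemma fv6 : ((6:Fin 8):ℕ) = 6 := rfl
lemma fv7 : ((7:Fin 8):ℕ) = 7 := rfl

lemma vec8_0 (a0 a1 a2 a3 a4 a5 a6 a7 : ℝ) : (![a0,a1,a2,a3,a4,a5,a6,a7] : Fin 8 → ℝ) 0 = a0 := rfl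
lemma vec8_1 (a0 a1 a2 a3 a4 a5 a6 a7 : ℝ) : (![a0,a1,a2,a3,a4,a5,a6,a7] : Fin 8 → ℝ) 1 = a1 := rfl
lemma vec8_2 (a0 a1 a2 a3 a4 a5 a6 a7 : ℝ) : (![a0,a1,a2,a3,a4,a5,a6,a7] : Fin 8 → ℝ) 2 = a2 := rfl
lemma vec8_3 (a0 a1 a2 a3 a4 a5 a6 a7 : ℝ) : (![a0,a1,a2,a3,a4,a5,a6,a7] : Fin 8 → ℝ) 3 = a3 := rfl
lemma vec8_4 (a0 a1 a2 a3 a4 a5 a6 a7 : ℝ) : (![a0,a1,a2,a3,a4,a5,a6,a7] : Fin 8 → ℝ) 4 = a4 := rfl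
lemma vec8_5 (a0 a1 a2 a3 a4 a5 a6 a7 : ℝ) : (![a0,a1,a2,a3,a4,a5,a6,a7] : Fin 8 → ℝ) 5 = a5 := rfl
lemma vec8_6 (a0 a1 a2 a3 a4 a5 a6 a7 : ℝ) : (![a0,a1,a2,a3,a4,a5,a6,a7] : Fin 8 → ℝ) 6 = a6 := rfl
lemma vec8_7 (a0 a1 a2 a3 a4 a5 a6 a7 : ℝ) : (![a0,a1,a2,a3,a4,a5,a6,a7] : Fin 8 → ℝ) 7 = a7 := rfl

/-- The action of the five elements on `ℝ^{2,6}`. -/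
noncomputable def F : Fin 5 → (Fin 8 → ℝ) → (Fin 8 → ℝ)
  | 0 => fun x => ![0, 0, 2*x 7, 0, 2*x 5, -(2*x 4), 0, -(2*x 2)]
  | 1 => fun x => ![0, 0, 0, 2*x 7, 2*x 6, 0, -(2*x 4), -(2*x 3)]
  | 2 => fun x => ![0, 0, 2*x 6, 2*x 5, 0, -(2*x 3), -(2*x 2), 0]
  | 3 => fun x => ![2*x 4, 2*x 7, 0, 0, 2*x 0, 0, 0, 2*x 1]
  | 4 => fun x => ![2*x 3, 2*x 6, 0, 2*x 0, 0, 0, 2*x 1, 0]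

lemma iota_inj : Function.Injective (ι Q26) := by
  intro x y h
  have h2 := congrArg (equivExterior Q26) h
  simp only [equivExterior, changeFormEquiv_apply, changeForm_ι] at h2
  exact (ExteriorAlgebra.ι_inj ℝ x y).mp h2

lemma polar_single (x : Fin 8 → ℝ) (b : Fin 8) :
    QuadraticMap.polar Q26 x (Pi.single b 1)
      = 2 * (if (b : ℕ) < 2 then (-1:ℝ) else 1) * x b := by
  simp only [QuadraticMap.polar, Q26, QuadraticMap.weightedSumSquares_apply, Pi.add_apply,
    smul_eq_mul, ← Finset.sum_sub_distrib]
  rw [Finset.sum_eq_single b]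
  · simp only [Pi.single_eq_same]; ring
  · intro i _ hib; simp only [Pi.single_eq_of_ne hib]; ring
  · intro h; exact absurd (Finset.mem_univ b) h

lemma comm_gen (a b : Fin 8) (x : Fin 8 → ℝ) :
    ⁅gCl a * gCl b, ι Q26 x⁆ =
      ι Q26 ((2 * (if (b:ℕ) < 2 then (-1:ℝ) else 1) * x b) • (Pi.single a 1 : Fin 8 → ℝ)
           - (2 * (if (a:ℕ) < 2 then (-1:ℝ) else 1) * x a) • (Pi.single b 1 : Fin 8 → ℝ)) := by
  set pa : ℝ := 2 * (if (a:ℕ) < 2 then (-1:ℝ) else 1) * x a with hpa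
  set pb : ℝ := 2 * (if (b:ℕ) < 2 then (-1:ℝ) else 1) * x b with hpb
  have h1 : ι Q26 x * ι Q26 (Pi.single a 1)
      = algebraMap ℝ _ pa - ι Q26 (Pi.single a 1) * ι Q26 x := by
    rw [ι_mul_ι_comm, polar_single]
  have h2 : ι Q26 x * ι Q26 (Pi.single b 1)
      = algebraMap ℝ _ pb - ι Q26 (Pi.single b 1) * ι Q26 x := by
    rw [ι_mul_ι_comm, polar_single]
  rw [Ring.lie_def, map_sub, map_smul, map_smul, gCl, gCl]
  set A := ι Q26 (Pi.single a 1)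
  set B := ι Q26 (Pi.single b 1)
  set X := ι Q26 x
  calc A * B * X - X * (A * B)
      = A * B * X - (X * A) * B := by noncomm_ring
    _ = A * B * X - (algebraMap ℝ _ pa - A * X) * B := by rw [h1]
    _ = A * B * X - algebraMap ℝ _ pa * B + A * (X * B) := by noncomm_ring
    _ = A * B * X - algebraMap ℝ _ pa * B
        + A * (algebraMap ℝ _ pb - B * X) := by rw [h2]
    _ = A * algebraMap ℝ _ pb - algebraMap ℝ _ pa * B := by noncomm_ring
    _ = pb • A - pa • B := by
        rw [← Algebra.commutes pb A, ← Algebra.smul_def, ← Algebra.smul_def]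

lemma add_lie_cl (a b c : CliffordAlgebra Q26) : ⁅a + b, c⁆ = ⁅a, c⁆ + ⁅b, c⁆ := by
  simp only [Ring.lie_def]; noncomm_ring

lemma lie_h0 (x : Fin 8 → ℝ) : ⁅hElt 0, ι Q26 x⁆ = ι Q26 (F 0 x) := by
  show ⁅gCl 2 * gCl 7 + gCl 4 * gCl 5, ι Q26 x⁆ = _
  rw [add_lie_cl, comm_gen, comm_gen, ← map_add]
  congr 1
  funext j
  fin_cases j <;>
    norm_num [F, vec8_0, vec8_1, vec8_2, vec8_3, vec8_4, vec8_5, vec8_6, vec8_7, Pi.single_apply,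
      fv0, fv1, fv2, fv3, fv4, fv5, fv6, fv7, Fin.ext_iff]

lemma lie_h1 (x : Fin 8 → ℝ) : ⁅hElt 1, ι Q26 x⁆ = ι Q26 (F 1 x) := by
  show ⁅gCl 3 * gCl 7 + gCl 4 * gCl 6, ι Q26 x⁆ = _
  rw [add_lie_cl, comm_gen, comm_gen, ← map_add]
  congr 1
  funext j
  fin_cases j <;>
    norm_num [F, vec8_0, vec8_1, vec8_2, vec8_3, vec8_4, vec8_5, vec8_6, vec8_7, Pi.single_apply,
      fv0, fv1, fv2, fv3, fv4, fv5, fv6, fv7, Fin.ext_iff]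

lemma lie_h2 (x : Fin 8 → ℝ) : ⁅hElt 2, ι Q26 x⁆ = ι Q26 (F 2 x) := by
  show ⁅gCl 2 * gCl 6 + gCl 3 * gCl 5, ι Q26 x⁆ = _
  rw [add_lie_cl, comm_gen, comm_gen, ← map_add]
  congr 1
  funext j
  fin_cases j <;>
    norm_num [F, vec8_0, vec8_1, vec8_2, vec8_3, vec8_4, vec8_5, vec8_6, vec8_7, Pi.single_apply,
      fv0, fv1, fv2, fv3, fv4, fv5, fv6, fv7, Fin.ext_iff]

lemma lie_h3 (x : Fin 8 → ℝ) : ⁅hElt 3, ι Q26 x⁆ = ι Q26 (F 3 x) := by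
  show ⁅gCl 0 * gCl 4 + gCl 1 * gCl 7, ι Q26 x⁆ = _
  rw [add_lie_cl, comm_gen, comm_gen, ← map_add]
  congr 1
  funext j
  fin_cases j <;>
    norm_num [F, vec8_0, vec8_1, vec8_2, vec8_3, vec8_4, vec8_5, vec8_6, vec8_7, Pi.single_apply,
      fv0, fv1, fv2, fv3, fv4, fv5, fv6, fv7, Fin.ext_iff]

lemma lie_h4 (x : Fin 8 → ℝ) : ⁅hElt 4, ι Q26 x⁆ = ι Q26 (F 4 x) := by
  show ⁅gCl 0 * gCl 3 + gCl 1 * gCl 6, ι Q26 x⁆ = _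
  rw [add_lie_cl, comm_gen, comm_gen, ← map_add]
  congr 1
  funext j
  fin_cases j <;>
    norm_num [F, vec8_0, vec8_1, vec8_2, vec8_3, vec8_4, vec8_5, vec8_6, vec8_7, Pi.single_apply,
      fv0, fv1, fv2, fv3, fv4, fv5, fv6, fv7, Fin.ext_iff]

lemma lie_hElt (k : Fin 5) (x : Fin 8 → ℝ) : ⁅hElt k, ι Q26 x⁆ = ι Q26 (F k x) := by
  fin_cases k
  · exact lie_h0 x
  · exact lie_h1 x
  · exact lie_h2 x
  · exact lie_h3 x
  · exact lie_h4 x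

/- ### composition lemmas -/

lemma compA (w : Fin 8 → ℝ) :
    F 0 (F 0 (F 1 (F 1 w))) = ![0,0,0,0,16*w 4,0,0,16*w 7] := by
  funext j
  fin_cases j <;>
    simp [F, vec8_0, vec8_1, vec8_2, vec8_3, vec8_4, vec8_5, vec8_6, vec8_7] <;> ring

lemma compB (w : Fin 8 → ℝ) :
    F 0 (F 0 (F 0 (F 2 (F 2 w)))) = ![0,0,0,0,32*w 5,0,0,-(32*w 2)] := by
  funext j
  fin_cases j <;>
    simp [F, vec8_0, vec8_1, vec8_2, vec8_3, vec8_4, vec8_5, vec8_6, vec8_7] <;> ring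

lemma compC (w : Fin 8 → ℝ) :
    F 1 (F 1 (F 1 (F 2 (F 2 w)))) = ![0,0,0,0,32*w 6,0,0,-(32*w 3)] := by
  funext j
  fin_cases j <;>
    simp [F, vec8_0, vec8_1, vec8_2, vec8_3, vec8_4, vec8_5, vec8_6, vec8_7] <;> ring

lemma compD (w : Fin 8 → ℝ) :
    F 3 (F 3 (F 3 (F 4 (F 4 w)))) = ![0,0,0,0,32*w 0,0,0,32*w 1] := by
  funext j
  fin_cases j <;>
    simp [F, vec8_0, vec8_1, vec8_2, vec8_3, vec8_4, vec8_5, vec8_6, vec8_7] <;> ring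

/- ### from a nonzero vector in the (4,7)-plane to everything -/

lemma pair47 (W : Submodule ℝ (Fin 8 → ℝ)) (hF : ∀ k w, w ∈ W → F k w ∈ W)
    (a b : ℝ) (hab : ¬(a = 0 ∧ b = 0))
    (hv : (![0,0,0,0,a,0,0,b] : Fin 8 → ℝ) ∈ W) : W = ⊤ := by
  have hd : a^2 + b^2 > 0 := by
    rcases not_and_or.mp hab with h | h
    · nlinarith [sq_nonneg b, sq_nonneg a, sq_abs a, abs_pos.mpr h]
    · nlinarith [sq_nonneg b, sq_nonneg a, sq_abs b, abs_pos.mpr h]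
  have hd' : a^2 + b^2 ≠ 0 := ne_of_gt hd
  have hs : (![0,0,0,2*b,0,0,-(2*a),0] : Fin 8 → ℝ) ∈ W := by
    have h := hF 1 _ hv
    have he : F 1 (![0,0,0,0,a,0,0,b] : Fin 8 → ℝ) = ![0,0,0,2*b,0,0,-(2*a),0] := by
      funext j
      fin_cases j <;>
        simp [F, vec8_0, vec8_1, vec8_2, vec8_3, vec8_4, vec8_5, vec8_6, vec8_7]
    rwa [he] at h
  have ht : (![0,0,0,-(4*a),0,0,-(4*b),0] : Fin 8 → ℝ) ∈ W := by
    have h := hF 2 _ (hF 0 _ hv)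
    have he : F 2 (F 0 (![0,0,0,0,a,0,0,b] : Fin 8 → ℝ)) = ![0,0,0,-(4*a),0,0,-(4*b),0] := by
      funext j
      fin_cases j <;>
        simp [F, vec8_0, vec8_1, vec8_2, vec8_3, vec8_4, vec8_5, vec8_6, vec8_7] <;> ring
    rwa [he] at h
  have h3 : (Pi.single (3:Fin 8) (1:ℝ) : Fin 8 → ℝ) ∈ W := by
    have hcomb : (Pi.single (3:Fin 8) (1:ℝ) : Fin 8 → ℝ)
        = (b/(2*(a^2+b^2))) • (![0,0,0,2*b,0,0,-(2*a),0] : Fin 8 → ℝ)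
          + (-(a/(4*(a^2+b^2)))) • (![0,0,0,-(4*a),0,0,-(4*b),0] : Fin 8 → ℝ) := by
      funext j
      fin_cases j <;>
        simp [Pi.single_apply, vec8_0, vec8_1, vec8_2, vec8_3, vec8_4, vec8_5, vec8_6, vec8_7,
          Fin.ext_iff, fv0, fv1, fv2, fv3, fv4, fv5, fv6, fv7] <;>
        (try field_simp) <;> (try ring)
    rw [hcomb]
    exact W.add_mem (W.smul_mem _ hs) (W.smul_mem _ ht)
  have h6 : (Pi.single (6:Fin 8) (1:ℝ) : Fin 8 → ℝ) ∈ W := by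
    have hcomb : (Pi.single (6:Fin 8) (1:ℝ) : Fin 8 → ℝ)
        = (-(a/(2*(a^2+b^2)))) • (![0,0,0,2*b,0,0,-(2*a),0] : Fin 8 → ℝ)
          + (-(b/(4*(a^2+b^2)))) • (![0,0,0,-(4*a),0,0,-(4*b),0] : Fin 8 → ℝ) := by
      funext j
      fin_cases j <;>
        simp [Pi.single_apply, vec8_0, vec8_1, vec8_2, vec8_3, vec8_4, vec8_5, vec8_6, vec8_7,
          Fin.ext_iff, fv0, fv1, fv2, fv3, fv4, fv5, fv6, fv7] <;>
        (try field_simp) <;> (try ring)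
    rw [hcomb]
    exact W.add_mem (W.smul_mem _ hs) (W.smul_mem _ ht)
  -- now generate all the basis vectors
  have hgen : ∀ (k : Fin 5) (i j : Fin 8) (c : ℝ), c ≠ 0 →
      (Pi.single i (1:ℝ) : Fin 8 → ℝ) ∈ W →
      F k (Pi.single i (1:ℝ)) = c • (Pi.single j (1:ℝ) : Fin 8 → ℝ) →
      (Pi.single j (1:ℝ) : Fin 8 → ℝ) ∈ W := by
    intro k i j c hc hi he
    have h := hF k _ hi
    rw [he] at h
    have := W.smul_mem c⁻¹ h
    rwa [smul_smul, inv_mul_cancel₀ hc, one_smul] at this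
  have evs : ∀ (k : Fin 5) (i j : Fin 8) (c : ℝ),
      (∀ m : Fin 8, F k (Pi.single i (1:ℝ)) m = c * (Pi.single j (1:ℝ) : Fin 8 → ℝ) m) →
      F k (Pi.single i (1:ℝ)) = c • (Pi.single j (1:ℝ) : Fin 8 → ℝ) := by
    intro k i j c h; funext m; simpa using h m
  have h0 : (Pi.single (0:Fin 8) (1:ℝ) : Fin 8 → ℝ) ∈ W := by
    refine hgen 4 3 0 2 (by norm_num) h3 (evs 4 3 0 2 ?_)
    intro m
    fin_cases m <;>
      simp [F, Pi.single_apply, vec8_0, vec8_1, vec8_2, vec8_3, vec8_4, vec8_5, vec8_6, vec8_7,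
        Fin.ext_iff, fv0, fv1, fv2, fv3, fv4, fv5, fv6, fv7]
  have h7 : (Pi.single (7:Fin 8) (1:ℝ) : Fin 8 → ℝ) ∈ W := by
    refine hgen 1 3 7 (-2) (by norm_num) h3 (evs 1 3 7 (-2) ?_)
    intro m
    fin_cases m <;>
      simp [F, Pi.single_apply, vec8_0, vec8_1, vec8_2, vec8_3, vec8_4, vec8_5, vec8_6, vec8_7,
        Fin.ext_iff, fv0, fv1, fv2, fv3, fv4, fv5, fv6, fv7]
  have h5 : (Pi.single (5:Fin 8) (1:ℝ) : Fin 8 → ℝ) ∈ W := by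
    refine hgen 2 3 5 (-2) (by norm_num) h3 (evs 2 3 5 (-2) ?_)
    intro m
    fin_cases m <;>
      simp [F, Pi.single_apply, vec8_0, vec8_1, vec8_2, vec8_3, vec8_4, vec8_5, vec8_6, vec8_7,
        Fin.ext_iff, fv0, fv1, fv2, fv3, fv4, fv5, fv6, fv7]
  have h1 : (Pi.single (1:Fin 8) (1:ℝ) : Fin 8 → ℝ) ∈ W := by
    refine hgen 4 6 1 2 (by norm_num) h6 (evs 4 6 1 2 ?_)
    intro m
    fin_cases m <;>
      simp [F, Pi.single_apply, vec8_0, vec8_1, vec8_2, vec8_3, vec8_4, vec8_5, vec8_6, vec8_7,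
        Fin.ext_iff, fv0, fv1, fv2, fv3, fv4, fv5, fv6, fv7]
  have h4 : (Pi.single (4:Fin 8) (1:ℝ) : Fin 8 → ℝ) ∈ W := by
    refine hgen 1 6 4 2 (by norm_num) h6 (evs 1 6 4 2 ?_)
    intro m
    fin_cases m <;>
      simp [F, Pi.single_apply, vec8_0, vec8_1, vec8_2, vec8_3, vec8_4, vec8_5, vec8_6, vec8_7,
        Fin.ext_iff, fv0, fv1, fv2, fv3, fv4, fv5, fv6, fv7]
  have h2 : (Pi.single (2:Fin 8) (1:ℝ) : Fin 8 → ℝ) ∈ W := by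
    refine hgen 2 6 2 2 (by norm_num) h6 (evs 2 6 2 2 ?_)
    intro m
    fin_cases m <;>
      simp [F, Pi.single_apply, vec8_0, vec8_1, vec8_2, vec8_3, vec8_4, vec8_5, vec8_6, vec8_7,
        Fin.ext_iff, fv0, fv1, fv2, fv3, fv4, fv5, fv6, fv7]
  have hall : ∀ i : Fin 8, (Pi.single i (1:ℝ) : Fin 8 → ℝ) ∈ W := by
    intro i
    fin_cases i <;> assumption
  rw [eq_top_iff]
  intro x _
  have hx : x = ∑ i : Fin 8, x i • (Pi.single i (1:ℝ) : Fin 8 → ℝ) := by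
    funext j
    simp [Pi.single_apply, Finset.sum_ite_eq']
  rw [hx]
  exact Submodule.sum_mem _ (fun i _ => W.smul_mem _ (hall i))

theorem curvature_elements_act_irreducibly :
    (∀ k : Fin 5, hElt k ∈
      Submodule.span ℝ {z : CliffordAlgebra Q26 | ∃ a b : Fin 8, a ≠ b ∧ z = gCl a * gCl b}) ∧
    (∀ (k : Fin 5) (x : Fin 8 → ℝ), ∃ y : Fin 8 → ℝ, ⁅hElt k, ι Q26 x⁆ = ι Q26 y) ∧
    (∀ W : Submodule ℝ (Fin 8 → ℝ),
      (∀ (k : Fin 5), ∀ w ∈ W, ∃ w' ∈ W, ⁅hElt k, ι Q26 w⁆ = ι Q26 w') →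
      W = ⊥ ∨ W = ⊤) := by
  refine ⟨?_, fun k x => ⟨F k x, lie_hElt k x⟩, ?_⟩
  · intro k
    fin_cases k <;>
      exact Submodule.add_mem _
        (Submodule.subset_span ⟨_, _, by decide, rfl⟩)
        (Submodule.subset_span ⟨_, _, by decide, rfl⟩)
  · intro W hW
    have hF : ∀ k w, w ∈ W → F k w ∈ W := by
      intro k w hw
      obtain ⟨w', hw', h⟩ := hW k w hw
      rw [lie_hElt] at h
      rw [← iota_inj h] at hw'
      exact hw'
    by_cases hbot : W = ⊥
    · exact Or.inl hbot
    right
    obtain ⟨w, hwW, hw0⟩ := (Submodule.ne_bot_iff W).mp hbot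
    have hi : ∃ i, w i ≠ 0 := by
      by_contra h
      push_neg at h
      exact hw0 (funext fun i => h i)
    obtain ⟨i, hi⟩ := hi
    fin_cases i
    · -- i = 0
      replace hi : w 0 ≠ 0 := hi
      have h := hF 3 _ (hF 3 _ (hF 3 _ (hF 4 _ (hF 4 _ hwW))))
      rw [compD] at h
      exact pair47 W hF _ _ (fun ⟨h1, _⟩ => hi (by linarith)) h
    · -- i = 1
      replace hi : w 1 ≠ 0 := hi
      have h := hF 3 _ (hF 3 _ (hF 3 _ (hF 4 _ (hF 4 _ hwW))))
      rw [compD] at h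
      exact pair47 W hF _ _ (fun ⟨_, h2⟩ => hi (by linarith)) h
    · -- i = 2
      replace hi : w 2 ≠ 0 := hi
      have h := hF 0 _ (hF 0 _ (hF 0 _ (hF 2 _ (hF 2 _ hwW))))
      rw [compB] at h
      exact pair47 W hF _ _ (fun ⟨_, h2⟩ => hi (by linarith)) h
    · -- i = 3
      replace hi : w 3 ≠ 0 := hi
      have h := hF 1 _ (hF 1 _ (hF 1 _ (hF 2 _ (hF 2 _ hwW))))
      rw [compC] at h
      exact pair47 W hF _ _ (fun ⟨_, h2⟩ => hi (by linarith)) h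
    · -- i = 4
      replace hi : w 4 ≠ 0 := hi
      have h := hF 0 _ (hF 0 _ (hF 1 _ (hF 1 _ hwW)))
      rw [compA] at h
      exact pair47 W hF _ _ (fun ⟨h1, _⟩ => hi (by linarith)) h
    · -- i = 5
      replace hi : w 5 ≠ 0 := hi
      have h := hF 0 _ (hF 0 _ (hF 0 _ (hF 2 _ (hF 2 _ hwW))))
      rw [compB] at h
      exact pair47 W hF _ _ (fun ⟨h1, _⟩ => hi (by linarith)) h
    · -- i = 6
      replace hi : w 6 ≠ 0 := hi
      have h := hF 1 _ (hF 1 _ (hF 1 _ (hF 2 _ (hF 2 _ hwW))))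
      rw [compC] at h
      exact pair47 W hF _ _ (fun ⟨h1, _⟩ => hi (by linarith)) h
    · -- i = 7
      replace hi : w 7 ≠ 0 := hi
      have h := hF 0 _ (hF 0 _ (hF 1 _ (hF 1 _ hwW)))
      rw [compA] at h
      exact pair47 W hF _ _ (fun ⟨_, h2⟩ => hi (by linarith)) h
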